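/- Let (X,μ) and (Y,ν) be σ-finite measure spaces, S : L¹(Y) → L¹(X) a stochastic operator, and P = {E_i} a partition of X into disjoint sets of finite measure. Then the composition M_P ∘ S is a stochastic integral operator: there exists a measurable stochastic kernel K_P : X × Y → [0,∞) with ∫_X K_P(x,y) dμ(x) = 1 for ν-a.e. y, such that (M_P S f)(x) = ∫_Y K_P(x,y) f(y) dν(y) for all f ∈ L¹(Y). -/

import Mathlib

open MeasureTheory ENNReal NNReal

set_option linter.unusedSectionVars false
set_option linter.unusedVariables false
set_option maxHeartbeats 1000000

section StochasticAux

variable {X Y : Type*} [MeasurableSpace X] [MeasurableSpace Y]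
  {μ : Measure X} {ν : Measure Y}

lemma stoch_norm_le (S : Lp ℝ 1 ν →ₗ[ℝ] Lp ℝ 1 μ)
    (hSpos : ∀ u : Lp ℝ 1 ν, 0 ≤ u → 0 ≤ S u)
    (hSint : ∀ u : Lp ℝ 1 ν, ∫ x, S u x ∂μ = ∫ y, u y ∂ν)
    (f : Lp ℝ 1 ν) : ‖S f‖ ≤ ‖f‖ := by
  set fp := Lp.posPart f with hfp
  set fn := Lp.negPart f with hfn
  have hfpn : fp - fn = f := by
    ext1
    filter_upwards [Lp.coeFn_sub fp fn, Lp.coeFn_posPart f, Lp.coeFn_negPart_eq_max f] with y h1 h2 h3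
    rw [h1]
    simp only [Pi.sub_apply, hfp, hfn, h2, h3]
    rcases le_total ((f : Y → ℝ) y) 0 with h | h
    · rw [sup_eq_right.2 h, sup_eq_left.2 (by linarith)]; ring
    · rw [sup_eq_left.2 h, sup_eq_right.2 (by linarith)]; ring
  have hp : 0 ≤ S fp := hSpos _ (by rw [← Lp.coeFn_nonneg]; filter_upwards [Lp.coeFn_posPart f] with y h; simp [hfp, h])
  have hn : 0 ≤ S fn := hSpos _ (by rw [← Lp.coeFn_nonneg]; filter_upwards [Lp.coeFn_negPart_eq_max f] with y h; simp [hfn, h])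
  have hSf : S f = S fp - S fn := by rw [← hfpn, map_sub]
  have hint : Integrable (fun x => S fp x + S fn x) μ :=
    (L1.integrable_coeFn (S fp)).add (L1.integrable_coeFn (S fn))
  have hb : ∀ᵐ x ∂μ, ‖S f x‖ ≤ S fp x + S fn x := by
    rw [← Lp.coeFn_nonneg] at hp hn
    filter_upwards [hp, hn, hSf ▸ Lp.coeFn_sub (S fp) (S fn)] with x h1 h2 h3
    rw [h3]
    simp only [Pi.sub_apply, Real.norm_eq_abs]
    rw [abs_sub_le_iff]
    constructor <;> [skip; skip] <;> simp at h1 h2 ⊢ <;> linarith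
  calc ‖S f‖ = ∫ x, ‖S f x‖ ∂μ := L1.norm_eq_integral_norm _
    _ ≤ ∫ x, (S fp x + S fn x) ∂μ :=
        integral_mono_ae ((L1.integrable_coeFn (S f)).norm) hint hb
    _ = (∫ x, S fp x ∂μ) + ∫ x, S fn x ∂μ :=
        integral_add (L1.integrable_coeFn _) (L1.integrable_coeFn _)
    _ = (∫ y, fp y ∂ν) + ∫ y, fn y ∂ν := by rw [hSint, hSint]
    _ = ∫ y, (fp y + fn y) ∂ν :=
        (integral_add (L1.integrable_coeFn _) (L1.integrable_coeFn _)).symm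
    _ = ∫ y, ‖f y‖ ∂ν := by
        refine integral_congr_ae ?_
        filter_upwards [Lp.coeFn_posPart f, Lp.coeFn_negPart_eq_max f] with y h1 h2
        show (Lp.posPart f : Y → ℝ) y + (Lp.negPart f : Y → ℝ) y = ‖(f : Y → ℝ) y‖
        rw [h1, h2, Real.norm_eq_abs]
        rcases le_total ((f : Y → ℝ) y) 0 with h | h
        · rw [sup_eq_right.2 h, sup_eq_left.2 (by linarith), abs_of_nonpos h]; ring
        · rw [sup_eq_left.2 h, sup_eq_right.2 (by linarith), abs_of_nonneg h]; ring
    _ = ‖f‖ := (L1.norm_eq_integral_norm _).symm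


lemma Lp.coeFn_finset_sum {α E : Type*} [MeasurableSpace α] {μ : Measure α}
    [NormedAddCommGroup E] {p : ℝ≥0∞} {ι : Type*} (s : Finset ι) (f : ι → Lp E p μ) :
    ⇑(∑ i ∈ s, f i) =ᵐ[μ] fun y => ∑ i ∈ s, f i y := by
  classical
  induction s using Finset.cons_induction with
  | empty => simp only [Finset.sum_empty]; exact Lp.coeFn_zero E p μ
  | cons a s ha ih =>
      simp only [Finset.sum_cons]
      filter_upwards [Lp.coeFn_add (f a) (∑ i ∈ s, f i), ih] with y h1 h2
      rw [h1]
      simp only [Pi.add_apply, h2]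

variable {Y : Type*} [MeasurableSpace Y] {ν : Measure Y}

lemma hasSum_indicatorConstLp_iUnion {B : ℕ → Set Y} (hB : ∀ k, MeasurableSet (B k))
    (hd : Pairwise (Function.onFun Disjoint B)) (hfin : ν (⋃ k, B k) ≠ ⊤) :
    HasSum (fun k => indicatorConstLp 1 (hB k)
        ((measure_mono (Set.subset_iUnion B k)).trans_lt (lt_top_iff_ne_top.2 hfin)).ne (1:ℝ))
      (indicatorConstLp 1 (MeasurableSet.iUnion hB) hfin 1) := by
  have hfink : ∀ k, ν (B k) ≠ ⊤ := fun k =>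
    ((measure_mono (Set.subset_iUnion B k)).trans_lt (lt_top_iff_ne_top.2 hfin)).ne
  have hfinrest : ∀ s : Finset ℕ, ν (⋃ k : {k // k ∉ s}, B k) ≠ ⊤ := fun s =>
    ((measure_mono (Set.iUnion_subset fun k : {k // k ∉ s} => Set.subset_iUnion B (k:ℕ))).trans_lt
      (lt_top_iff_ne_top.2 hfin)).ne
  have key : ∀ s : Finset ℕ,
      indicatorConstLp 1 (MeasurableSet.iUnion hB) hfin (1:ℝ)
        - ∑ k ∈ s, indicatorConstLp 1 (hB k) (hfink k) (1:ℝ)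
      = indicatorConstLp 1 (MeasurableSet.iUnion (fun k : {k // k ∉ s} => hB k)) (hfinrest s) (1:ℝ) := by
    intro s
    ext1
    have h2 := indicatorConstLp_coeFn (μ := ν) (p := (1:ℝ≥0∞))
      (hs := MeasurableSet.iUnion hB) (hμs := hfin) (c := (1:ℝ))
    have h3 := indicatorConstLp_coeFn (μ := ν) (p := (1:ℝ≥0∞))
      (hs := MeasurableSet.iUnion (fun k : {k // k ∉ s} => hB k)) (hμs := hfinrest s) (c := (1:ℝ))
    have h5 : ∀ᵐ y ∂ν, ∀ k ∈ (s : Set ℕ),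
        (indicatorConstLp 1 (hB k) (hfink k) (1:ℝ) : Y → ℝ) y
          = (B k).indicator (fun _ => (1:ℝ)) y :=
      (ae_ball_iff s.countable_toSet).2 fun k _ =>
        indicatorConstLp_coeFn (μ := ν) (p := (1:ℝ≥0∞)) (hs := hB k) (hμs := hfink k) (c := (1:ℝ))
    filter_upwards [Lp.coeFn_sub (indicatorConstLp 1 (MeasurableSet.iUnion hB) hfin (1:ℝ))
        (∑ k ∈ s, indicatorConstLp 1 (hB k) (hfink k) (1:ℝ)),
      h2, h3, Lp.coeFn_finset_sum s (fun k => indicatorConstLp 1 (hB k) (hfink k) (1:ℝ)), h5]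
      with y h1 h2 h3 h4 h5
    rw [h1, h3]
    simp only [Pi.sub_apply, h2, h4]
    rw [Finset.sum_congr rfl (fun k hk => h5 k (by simpa using hk))]
    by_cases hy : ∃ k, y ∈ B k
    · obtain ⟨k, hk⟩ := hy
      have huniq : ∀ j, y ∈ B j → j = k := fun j hj => by
        by_contra hjk
        exact (hd hjk).ne_of_mem hj hk rfl
      by_cases hks : k ∈ s
      · rw [Set.indicator_of_mem (Set.mem_iUnion.2 ⟨k, hk⟩), Set.indicator_of_notMem (by
          simp only [Set.mem_iUnion]
          rintro ⟨⟨j, hjs⟩, hj⟩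
          exact hjs (huniq j hj ▸ hks)), Finset.sum_eq_single_of_mem k hks (fun j hjs hjk => by
            rw [Set.indicator_of_notMem (fun hj => hjk (huniq j hj))]),
          Set.indicator_of_mem hk]
        ring
      · rw [Set.indicator_of_mem (Set.mem_iUnion.2 ⟨k, hk⟩),
          Set.indicator_of_mem (Set.mem_iUnion.2 ⟨⟨k, hks⟩, hk⟩),
          Finset.sum_eq_zero (fun j hjs => Set.indicator_of_notMem
            (fun hj => hks ((huniq j hj) ▸ hjs)) _)]
        ring
    · push_neg at hy
      rw [Set.indicator_of_notMem (by simpa using hy),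
        Set.indicator_of_notMem (by simp only [Set.mem_iUnion]; rintro ⟨⟨j,_⟩, hj⟩; exact hy j hj),
        Finset.sum_eq_zero (fun j _ => Set.indicator_of_notMem (hy j) _)]
      ring
  rw [HasSum, tendsto_iff_dist_tendsto_zero]
  have hdist : ∀ s : Finset ℕ,
      dist (∑ k ∈ s, indicatorConstLp 1 (hB k) (hfink k) (1:ℝ))
        (indicatorConstLp 1 (MeasurableSet.iUnion hB) hfin 1)
      = (ν (⋃ k : {k // k ∉ s}, B k)).toReal := by
    intro s
    rw [dist_comm, dist_eq_norm, key s, norm_indicatorConstLp one_ne_zero ENNReal.one_ne_top]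
    simp
    rfl
  simp_rw [hdist]
  have hsum : ∑' k, ν (B k) ≠ ⊤ := by
    rwa [← measure_iUnion hd hB]
  have := ENNReal.tendsto_tsum_compl_atTop_zero hsum
  have h2 : Filter.Tendsto (fun s : Finset ℕ => ν (⋃ k : {k // k ∉ s}, B k)) Filter.atTop (nhds 0) := by
    convert this using 2 with s
    exact measure_iUnion (fun j k hjk => hd (fun h : (j:ℕ) = (k:ℕ) => hjk (Subtype.ext h)))
      (fun k => hB k)
  have h3 := (ENNReal.tendsto_toReal ENNReal.zero_ne_top).comp h2
  exact h3


lemma indicatorConstLp_congr' {α E : Type*} [MeasurableSpace α] {μ : Measure α}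
    [NormedAddCommGroup E] {p : ℝ≥0∞} {s t : Set α} (h : s = t) (hs : MeasurableSet s)
    (hμs : μ s ≠ ⊤) (ht : MeasurableSet t) (hμt : μ t ≠ ⊤) (c : E) :
    indicatorConstLp p hs hμs c = indicatorConstLp p ht hμt c := by subst h; rfl

variable {X Y : Type*} [MeasurableSpace X] [MeasurableSpace Y]
  {μ : Measure X} {ν : Measure Y}

/-- Integration over a set as a continuous linear functional on L¹. -/
noncomputable def setIntegralCLM (μ : Measure X) (A : Set X) : Lp ℝ 1 μ →L[ℝ] ℝ :=
  LinearMap.mkContinuous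
    { toFun := fun g => ∫ x in A, g x ∂μ
      map_add' := fun g h => by
        rw [← integral_add ((L1.integrable_coeFn g).restrict)
          ((L1.integrable_coeFn h).restrict)]
        exact integral_congr_ae (ae_restrict_of_ae ((Lp.coeFn_add g h).mono fun x hx => by
          rw [hx]; rfl))
      map_smul' := fun c g => by
        simp only [RingHom.id_apply]
        rw [← integral_smul]
        exact integral_congr_ae (ae_restrict_of_ae ((Lp.coeFn_smul c g).mono fun x hx => by
          rw [hx]; rfl)) }
    1 (fun g => by
      simp only [LinearMap.coe_mk, AddHom.coe_mk, one_mul]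
      calc ‖∫ x in A, g x ∂μ‖ ≤ ∫ x in A, ‖g x‖ ∂μ := norm_integral_le_integral_norm _
        _ ≤ ∫ x, ‖g x‖ ∂μ := integral_mono_measure Measure.restrict_le_self
            (Filter.Eventually.of_forall fun x => norm_nonneg _)
            (L1.integrable_coeFn g).norm
        _ = ‖g‖ := (L1.norm_eq_integral_norm g).symm)

lemma setIntegralCLM_apply (A : Set X) (g : Lp ℝ 1 μ) :
    setIntegralCLM μ A g = ∫ x in A, g x ∂μ := rfl

lemma setIntegralCLM_nonneg (A : Set X) {g : Lp ℝ 1 μ} (hg : 0 ≤ g) :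
    0 ≤ setIntegralCLM μ A g := by
  rw [setIntegralCLM_apply]
  refine integral_nonneg_of_ae (ae_restrict_of_ae ?_)
  exact (Lp.coeFn_nonneg g).2 hg

variable {Y : Type*} [MeasurableSpace Y] {ν : Measure Y} [SigmaFinite ν]

namespace StochAux

/-- disjointed spanning sets -/
noncomputable def C (ν : Measure Y) [SigmaFinite ν] (n : ℕ) : Set Y :=
  disjointed (spanningSets ν) n

lemma hC (n : ℕ) : MeasurableSet (C ν n) :=
  MeasurableSet.disjointed (measurableSet_spanningSets ν) n

lemma hCfin (n : ℕ) : ν (C ν n) ≠ ⊤ :=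
  ((measure_mono (disjointed_subset _ _)).trans_lt (measure_spanningSets_lt_top ν n)).ne

lemma hCdisj : Pairwise (Function.onFun Disjoint (C ν)) := disjoint_disjointed _

lemma hCunion : ⋃ n, C ν n = Set.univ := by
  simp only [C]
  rw [iUnion_disjointed, iUnion_spanningSets]

lemma interCfin {A : Set Y} (n : ℕ) : ν (A ∩ C ν n) ≠ ⊤ :=
  ((measure_mono Set.inter_subset_right).trans_lt (lt_top_iff_ne_top.2 (hCfin n))).ne

/-- The indicator of a finite measure set, as an element of L¹. -/
noncomputable abbrev chi {A : Set Y} (hA : MeasurableSet A) (h : ν A ≠ ⊤) : Lp ℝ 1 ν :=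
  indicatorConstLp 1 hA h 1

lemma chi_nonneg {A : Set Y} (hA : MeasurableSet A) (h : ν A ≠ ⊤) : 0 ≤ chi hA h := by
  rw [← Lp.coeFn_nonneg]
  filter_upwards [indicatorConstLp_coeFn (μ := ν) (p := (1:ℝ≥0∞)) (hs := hA) (hμs := h)
    (c := (1:ℝ))] with y hy
  rw [chi, hy]
  exact Set.indicator_nonneg (fun _ _ => zero_le_one) y

lemma chi_null {A : Set Y} (hA : MeasurableSet A) (h0 : ν A = 0) (h : ν A ≠ ⊤) :
    chi hA h = 0 := by
  ext1
  filter_upwards [indicatorConstLp_coeFn (μ := ν) (p := (1:ℝ≥0∞)) (hs := hA) (hμs := h)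
    (c := (1:ℝ)), Lp.coeFn_zero ℝ 1 ν, (ae_iff.2 (by simpa using h0) :
      ∀ᵐ y ∂ν, y ∉ A)] with y h1 h2 h3
  show (indicatorConstLp 1 hA h (1:ℝ) : Y → ℝ) y = _
  rw [h1, h2, Set.indicator_of_notMem h3]
  rfl

variable (ℓ : Lp ℝ 1 ν →L[ℝ] ℝ) (hpos : ∀ f : Lp ℝ 1 ν, 0 ≤ f → 0 ≤ ℓ f)

/-- The measure associated to a positive functional on L¹. -/
noncomputable def funcMeasure : Measure Y :=
  Measure.ofMeasurable
    (fun A hA => ∑' n, ENNReal.ofReal (ℓ (chi (hA.inter (hC (ν := ν) n)) (interCfin (ν := ν) n))))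
    (by
      have h0 : ∀ n : ℕ, ℓ (chi ((MeasurableSet.empty (α := Y)).inter (hC n)) (interCfin n))
          = 0 := fun n => by
        rw [chi_null _ (by simp) _, map_zero]
      simp only [h0, ENNReal.ofReal_zero, tsum_zero])
    (by
      intro A hA hd
      have hdisj : ∀ n : ℕ, Pairwise (Function.onFun Disjoint (fun k => A k ∩ C ν n)) :=
        fun n j k hjk => ((hd hjk).mono Set.inter_subset_left Set.inter_subset_left)
      have hsub : ∀ n, ν (⋃ k, A k ∩ C ν n) ≠ ⊤ := fun n =>
        ((measure_mono (Set.iUnion_subset fun k => Set.inter_subset_right)).trans_lt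
          (lt_top_iff_ne_top.2 (hCfin n))).ne
      have key : ∀ n : ℕ, ENNReal.ofReal (ℓ (chi ((MeasurableSet.iUnion hA).inter (hC n))
          (interCfin n)))
          = ∑' k, ENNReal.ofReal (ℓ (chi ((hA k).inter (hC n)) (interCfin n))) := by
        intro n
        have h1 := hasSum_indicatorConstLp_iUnion (ν := ν) (B := fun k => A k ∩ C ν n)
          (fun k => (hA k).inter (hC n)) (hdisj n) (hsub n)
        have h2 : HasSum (fun k => ℓ (chi ((hA k).inter (hC n)) (interCfin n)))
            (ℓ (chi ((MeasurableSet.iUnion hA).inter (hC n)) (interCfin n))) := by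
          have h3 := ℓ.hasSum h1
          convert h3 using 2
          exact indicatorConstLp_congr' (by rw [Set.iUnion_inter]) _ _ _ _ _
        rw [← h2.tsum_eq, ENNReal.ofReal_tsum_of_nonneg
          (fun k => hpos _ (chi_nonneg _ _)) h2.summable]
      rw [tsum_congr key, ENNReal.tsum_comm])

lemma funcMeasure_apply {A : Set Y} (hA : MeasurableSet A) :
    funcMeasure ℓ hpos A = ∑' n, ENNReal.ofReal (ℓ (chi (hA.inter (hC (ν := ν) n)) (interCfin (ν := ν) n))) :=
  Measure.ofMeasurable_apply A hA

lemma funcMeasure_apply_of_finite {A : Set Y} (hA : MeasurableSet A) (hfin : ν A ≠ ⊤) :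
    funcMeasure ℓ hpos A = ENNReal.ofReal (ℓ (chi hA hfin)) := by
  rw [funcMeasure_apply ℓ hpos hA]
  have hdisj : Pairwise (Function.onFun Disjoint (fun n => A ∩ C ν n)) :=
    fun j k hjk => (hCdisj hjk).mono Set.inter_subset_right Set.inter_subset_right
  have huni : (⋃ n, A ∩ C ν n) = A := by
    rw [← Set.inter_iUnion, hCunion, Set.inter_univ]
  have hufin : ν (⋃ n, A ∩ C ν n) ≠ ⊤ := by rw [huni]; exact hfin
  have h1 := hasSum_indicatorConstLp_iUnion (ν := ν) (B := fun n => A ∩ C ν n)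
    (fun n => hA.inter (hC n)) hdisj hufin
  have h2 : HasSum (fun n => ℓ (chi (hA.inter (hC (ν := ν) n)) (interCfin (ν := ν) n))) (ℓ (chi hA hfin)) := by
    have h3 := ℓ.hasSum h1
    convert h3 using 2
    exact indicatorConstLp_congr' huni.symm _ _ _ _ _
  rw [← h2.tsum_eq, ENNReal.ofReal_tsum_of_nonneg (fun k => hpos _ (chi_nonneg _ _)) h2.summable]

lemma funcMeasure_le {A : Set Y} (hA : MeasurableSet A) :
    funcMeasure ℓ hpos A ≤ (‖ℓ‖₊ : ℝ≥0∞) * ν A := by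
  rw [funcMeasure_apply ℓ hpos hA]
  have hbound : ∀ n : ℕ, ENNReal.ofReal (ℓ (chi (hA.inter (hC (ν := ν) n)) (interCfin (ν := ν) n)))
      ≤ (‖ℓ‖₊ : ℝ≥0∞) * ν (A ∩ C ν n) := by
    intro n
    have h1 : ℓ (chi (hA.inter (hC (ν := ν) n)) (interCfin (ν := ν) n)) ≤ ‖ℓ‖ * (ν (A ∩ C ν n)).toReal := by
      calc ℓ (chi (hA.inter (hC (ν := ν) n)) (interCfin (ν := ν) n))
          ≤ ‖ℓ (chi (hA.inter (hC (ν := ν) n)) (interCfin (ν := ν) n))‖ := le_abs_self _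
        _ ≤ ‖ℓ‖ * ‖chi (hA.inter (hC (ν := ν) n)) (interCfin (ν := ν) n)‖ := ℓ.le_opNorm _
        _ = ‖ℓ‖ * (ν (A ∩ C ν n)).toReal := by
            rw [chi, norm_indicatorConstLp one_ne_zero ENNReal.one_ne_top]
            simp
            exact Or.inl rfl
    calc ENNReal.ofReal (ℓ (chi (hA.inter (hC (ν := ν) n)) (interCfin (ν := ν) n)))
        ≤ ENNReal.ofReal (‖ℓ‖ * (ν (A ∩ C ν n)).toReal) := ENNReal.ofReal_le_ofReal h1
      _ ≤ (‖ℓ‖₊ : ℝ≥0∞) * ν (A ∩ C ν n) := by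
          rw [ENNReal.ofReal_mul (norm_nonneg _), ← coe_nnnorm, ENNReal.ofReal_coe_nnreal]
          exact mul_le_mul_right ENNReal.ofReal_toReal_le _
  calc ∑' n, ENNReal.ofReal (ℓ (chi (hA.inter (hC (ν := ν) n)) (interCfin (ν := ν) n)))
      ≤ ∑' n, (‖ℓ‖₊ : ℝ≥0∞) * ν (A ∩ C ν n) := ENNReal.tsum_le_tsum hbound
    _ = (‖ℓ‖₊ : ℝ≥0∞) * ∑' n, ν (A ∩ C ν n) := ENNReal.tsum_mul_left
    _ = (‖ℓ‖₊ : ℝ≥0∞) * ν A := by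
        rw [← measure_iUnion (fun j k hjk => (hCdisj hjk).mono Set.inter_subset_right
          Set.inter_subset_right) (fun n => hA.inter (hC n)), ← Set.inter_iUnion, hCunion,
          Set.inter_univ]

lemma funcMeasure_le_smul : funcMeasure ℓ hpos ≤ (‖ℓ‖₊ : ℝ≥0) • ν := by
  rw [Measure.le_iff]
  intro A hA
  calc funcMeasure ℓ hpos A ≤ (‖ℓ‖₊ : ℝ≥0∞) * ν A := funcMeasure_le ℓ hpos hA
    _ = ((‖ℓ‖₊ : ℝ≥0) • ν) A := by rw [Measure.smul_apply, ENNReal.smul_def, smul_eq_mul]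

instance : SigmaFinite (funcMeasure ℓ hpos) :=
  Measure.sigmaFinite_of_le _ (funcMeasure_le_smul ℓ hpos)

lemma funcMeasure_ac : funcMeasure ℓ hpos ≪ ν := by
  refine Measure.AbsolutelyContinuous.mk (fun A hA h0 => ?_)
  have := funcMeasure_le ℓ hpos hA
  rw [h0, mul_zero] at this
  exact le_antisymm this (by simp)

end StochAux


section
variable {Y : Type*} [MeasurableSpace Y] {ν : Measure Y} [SigmaFinite ν]
  (ρ : Measure Y) [SigmaFinite ρ]

-- generic density lemmas for a sigma-finite ρ ≪ ν with ρ ≤ c • ν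
lemma dens_le_ae {c : ℝ≥0} (hle : ρ ≤ (c : ℝ≥0∞) • ν) :
    ∀ᵐ y ∂ν, ρ.rnDeriv ν y ≤ (c : ℝ≥0∞) := by
  refine ae_le_of_forall_setLIntegral_le_of_sigmaFinite (Measure.measurable_rnDeriv ρ ν)
    (fun s hs _ => ?_)
  calc ∫⁻ y in s, ρ.rnDeriv ν y ∂ν ≤ ρ s := Measure.setLIntegral_rnDeriv_le s
    _ ≤ ((c : ℝ≥0∞) • ν) s := Measure.le_iff'.1 hle s
    _ = ∫⁻ _ in s, (c : ℝ≥0∞) ∂ν := by simp [Measure.smul_apply, setLIntegral_const]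
end


section
variable {Y : Type*} [MeasurableSpace Y] {ν : Measure Y} [SigmaFinite ν]

lemma integrable_dens_mul {d : Y → ℝ} (hd : Measurable d) {c : ℝ}
    (hbd : ∀ᵐ y ∂ν, |d y| ≤ c) (f : Lp ℝ 1 ν) :
    Integrable (fun y => d y * f y) ν := by
  refine Integrable.mono' ((L1.integrable_coeFn f).norm.smul c) 
    (hd.aestronglyMeasurable.mul (Lp.aestronglyMeasurable f)) ?_
  filter_upwards [hbd] with y hy
  rw [norm_mul]
  simp only [Pi.smul_apply, smul_eq_mul, norm_norm]
  exact mul_le_mul_of_nonneg_right (by simpa [Real.norm_eq_abs] using hy) (norm_nonneg _)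

/-- Integration against a bounded measurable density, as a CLM on L¹. -/
noncomputable def densCLM {d : Y → ℝ} (hd : Measurable d) {c : ℝ} (hc : 0 ≤ c)
    (hbd : ∀ᵐ y ∂ν, |d y| ≤ c) : Lp ℝ 1 ν →L[ℝ] ℝ :=
  LinearMap.mkContinuous
    { toFun := fun f => ∫ y, d y * f y ∂ν
      map_add' := fun f g => by
        rw [← integral_add (integrable_dens_mul hd hbd f) (integrable_dens_mul hd hbd g)]
        refine integral_congr_ae ?_
        filter_upwards [Lp.coeFn_add f g] with y hy
        rw [hy]
        simp only [Pi.add_apply]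
        ring
      map_smul' := fun r f => by
        simp only [RingHom.id_apply]
        rw [← integral_smul]
        refine integral_congr_ae ?_
        filter_upwards [Lp.coeFn_smul r f] with y hy
        rw [hy]
        simp only [Pi.smul_apply, smul_eq_mul]
        ring }
    c (fun f => by
      simp only [LinearMap.coe_mk, AddHom.coe_mk]
      calc ‖∫ y, d y * f y ∂ν‖ ≤ ∫ y, ‖d y * f y‖ ∂ν := norm_integral_le_integral_norm _
        _ ≤ ∫ y, c * ‖f y‖ ∂ν := by
            refine integral_mono_ae ((integrable_dens_mul hd hbd f).norm)
              ((L1.integrable_coeFn f).norm.const_mul c) ?_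
            filter_upwards [hbd] with y hy
            rw [norm_mul]
            exact mul_le_mul_of_nonneg_right (by simpa [Real.norm_eq_abs] using hy)
              (norm_nonneg _)
        _ = c * ‖f‖ := by rw [integral_const_mul, ← L1.norm_eq_integral_norm])

lemma densCLM_apply {d : Y → ℝ} (hd : Measurable d) {c : ℝ} (hc : 0 ≤ c)
    (hbd : ∀ᵐ y ∂ν, |d y| ≤ c) (f : Lp ℝ 1 ν) :
    densCLM hd hc hbd f = ∫ y, d y * f y ∂ν := rfl

lemma indicatorConstLp_eq_smul {s : Set Y} (hs : MeasurableSet s) (h : ν s ≠ ⊤) (c' : ℝ) :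
    indicatorConstLp 1 hs h c' = c' • indicatorConstLp 1 hs h (1:ℝ) := by
  ext1
  filter_upwards [indicatorConstLp_coeFn (μ := ν) (p := (1:ℝ≥0∞)) (hs := hs) (hμs := h)
      (c := c'),
    Lp.coeFn_smul c' (indicatorConstLp 1 hs h (1:ℝ)),
    indicatorConstLp_coeFn (μ := ν) (p := (1:ℝ≥0∞)) (hs := hs) (hμs := h) (c := (1:ℝ))]
    with y h1 h2 h3
  rw [h1, h2, Pi.smul_apply, h3, smul_eq_mul]
  by_cases hy : y ∈ s <;> simp [hy]

/-- Representation of a positive functional on L¹ by its density. -/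
lemma repr_eq (ℓ : Lp ℝ 1 ν →L[ℝ] ℝ) (ρ : Measure Y) [SigmaFinite ρ] (hac : ρ ≪ ν)
    (hchi : ∀ (A : Set Y) (hA : MeasurableSet A) (hfin : ν A ≠ ⊤),
      ρ A = ENNReal.ofReal (ℓ (indicatorConstLp 1 hA hfin 1)))
    (hposχ : ∀ (A : Set Y) (hA : MeasurableSet A) (hfin : ν A ≠ ⊤),
      0 ≤ ℓ (indicatorConstLp 1 hA hfin 1))
    {c : ℝ≥0} (hbd : ∀ᵐ y ∂ν, ρ.rnDeriv ν y ≤ (c : ℝ≥0∞)) (f : Lp ℝ 1 ν) :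
    ℓ f = ∫ y, (ρ.rnDeriv ν y).toReal * f y ∂ν := by
  have hd : Measurable fun y => (ρ.rnDeriv ν y).toReal :=
    (Measure.measurable_rnDeriv ρ ν).ennreal_toReal
  have hbd' : ∀ᵐ y ∂ν, |(ρ.rnDeriv ν y).toReal| ≤ (c : ℝ) := by
    filter_upwards [hbd] with y hy
    rw [abs_of_nonneg ENNReal.toReal_nonneg]
    exact ENNReal.toReal_le_of_le_ofReal c.coe_nonneg (by simpa using hy)
  suffices h : ∀ u : Lp ℝ 1 ν, ℓ u = densCLM hd c.coe_nonneg hbd' u from h f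
  refine Lp.induction (p := (1:ℝ≥0∞)) ENNReal.one_ne_top
    (fun u : Lp ℝ 1 ν => ℓ u = densCLM hd c.coe_nonneg hbd' u) ?_ ?_ ?_
  · intro c' s hs hνs
    rw [Lp.simpleFunc.coe_indicatorConst]
    have hρs : ∫ y in s, (ρ.rnDeriv ν y).toReal ∂ν = (ρ s).toReal := by
      rw [← Measure.setLIntegral_rnDeriv hac s]
      refine integral_toReal (Measure.measurable_rnDeriv ρ ν).aemeasurable.restrict ?_
      exact ae_restrict_of_ae (Measure.rnDeriv_lt_top ρ ν)
    have hℓχ : ℓ (indicatorConstLp 1 hs hνs.ne (1:ℝ)) = (ρ s).toReal := by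
      rw [hchi s hs hνs.ne, ENNReal.toReal_ofReal (hposχ s hs hνs.ne)]
    rw [indicatorConstLp_eq_smul, _root_.map_smul, densCLM_apply, smul_eq_mul, hℓχ]
    have : (fun y => (ρ.rnDeriv ν y).toReal
          * (c' • indicatorConstLp 1 hs hνs.ne (1:ℝ) : Lp ℝ 1 ν) y)
        =ᵐ[ν] s.indicator (fun y => (ρ.rnDeriv ν y).toReal * c') := by
      filter_upwards [Lp.coeFn_smul c' (indicatorConstLp 1 hs hνs.ne (1:ℝ)),
        indicatorConstLp_coeFn (μ := ν) (p := (1:ℝ≥0∞)) (hs := hs) (hμs := hνs.ne)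
          (c := (1:ℝ))] with y h1 h2
      rw [h1, Pi.smul_apply, h2, smul_eq_mul]
      by_cases hy : y ∈ s <;> simp [hy]
    rw [integral_congr_ae this, integral_indicator hs, integral_mul_const, hρs]
    ring
  · intro u v hu hv _ hPu hPv
    simp only [map_add, hPu, hPv]
  · exact isClosed_eq ℓ.continuous (densCLM hd c.coe_nonneg hbd').continuous
end

end StochasticAux

/-- The averaging operator associated with a countable partition `P`. -/
noncomputable def partitionAverage {X : Type*} [MeasurableSpace X] (μ : Measure X)
    {ι : Type*} (P : ι → Set X) (f : X → ℝ) : X → ℝ :=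
  fun x => ∑' i, (P i).indicator
    (fun _ => if μ (P i) = 0 then 0 else (μ (P i)).toReal⁻¹ * ∫ t in P i, f t ∂μ) x

theorem average_of_stochastic_is_integral_operator
    {X Y : Type*} [MeasurableSpace X] [MeasurableSpace Y]
    (μ : Measure X) (ν : Measure Y) [SigmaFinite μ] [SigmaFinite ν]
    (S : Lp ℝ 1 ν →ₗ[ℝ] Lp ℝ 1 μ)
    (hSpos : ∀ u : Lp ℝ 1 ν, 0 ≤ u → 0 ≤ S u)
    (hSint : ∀ u : Lp ℝ 1 ν, ∫ x, S u x ∂μ = ∫ y, u y ∂ν)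
    (P : ℕ → Set X) (hmeas : ∀ i, MeasurableSet (P i))
    (hdisj : Pairwise (Function.onFun Disjoint P))
    (hcover : (⋃ i, P i) = Set.univ)
    (hfin : ∀ i, μ (P i) < ⊤) :
    ∃ K : X → Y → ℝ,
      Measurable (Function.uncurry K) ∧
      (∀ x y, 0 ≤ K x y) ∧
      (∀ᵐ y ∂ν, ∫ x, K x y ∂μ = 1) ∧
      (∀ f : Lp ℝ 1 ν, ∀ x : X,
        partitionAverage μ P (S f) x = ∫ y, K x y * f y ∂ν) := by
  classical
  open StochAux in
  let Scont : Lp ℝ 1 ν →L[ℝ] Lp ℝ 1 μ :=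
    S.mkContinuous 1 (fun f => by simpa using stoch_norm_le S hSpos hSint f)
  let ℓ : ℕ → (Lp ℝ 1 ν →L[ℝ] ℝ) := fun i => (setIntegralCLM μ (P i)).comp Scont
  have hℓ_apply : ∀ i (f : Lp ℝ 1 ν), ℓ i f = ∫ x in P i, (S f : X → ℝ) x ∂μ :=
    fun i f => rfl
  have hℓpos : ∀ i, ∀ f : Lp ℝ 1 ν, 0 ≤ f → 0 ≤ ℓ i f := fun i f hf =>
    setIntegralCLM_nonneg (P i) (hSpos f hf)
  let ρ : ℕ → Measure Y := fun i => funcMeasure (ℓ i) (hℓpos i)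
  let g : ℕ → Y → ℝ≥0∞ := fun i => (ρ i).rnDeriv ν
  have hgmeas : ∀ i, Measurable (g i) := fun i => Measure.measurable_rnDeriv _ _
  have hsumℓ : ∀ f : Lp ℝ 1 ν, HasSum (fun i => ℓ i f) (∫ y, (f : Y → ℝ) y ∂ν) := by
    intro f
    have h1 := hasSum_integral_iUnion (μ := μ) hmeas hdisj
      ((L1.integrable_coeFn (Scont f)).integrableOn)
    rw [hcover, Measure.restrict_univ] at h1
    rw [← hSint f]
    exact h1
  have hρnull : ∀ i, μ (P i) = 0 → ρ i = 0 := by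
    intro i h
    have hz : ∀ f : Lp ℝ 1 ν, ℓ i f = 0 := by
      intro f
      have h0 : μ.restrict (P i) = 0 := Measure.restrict_eq_zero.2 h
      rw [hℓ_apply, h0, integral_zero_measure]
    refine Measure.ext fun A hA => ?_
    rw [show ρ i = funcMeasure (ℓ i) (hℓpos i) from rfl,
      funcMeasure_apply (ℓ i) (hℓpos i) hA]
    simp [hz]
  have hsum_meas : ∀ A : Set Y, MeasurableSet A → ∑' i, ρ i A = ν A := by
    intro A hA
    have h1 : ∀ i, ρ i A
        = ∑' n, ENNReal.ofReal (ℓ i (chi (hA.inter (hC (ν := ν) n)) (interCfin (ν := ν) n))) :=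
      fun i => funcMeasure_apply (ℓ i) (hℓpos i) hA
    rw [tsum_congr h1, ENNReal.tsum_comm]
    have hn : ∀ n, ∑' i, ENNReal.ofReal (ℓ i (chi (hA.inter (hC (ν := ν) n)) (interCfin (ν := ν) n)))
        = ν (A ∩ C ν n) := by
      intro n
      have h2 := hsumℓ (chi (hA.inter (hC (ν := ν) n)) (interCfin (ν := ν) n))
      have h3 : ∫ y, (chi (hA.inter (hC (ν := ν) n)) (interCfin (ν := ν) n) : Y → ℝ) y ∂ν
          = (ν (A ∩ C ν n)).toReal := by
        rw [show (chi (hA.inter (hC (ν := ν) n)) (interCfin (ν := ν) n) : Lp ℝ 1 ν)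
          = indicatorConstLp 1 (hA.inter (hC (ν := ν) n)) (interCfin (ν := ν) n) (1:ℝ) from rfl,
          integral_indicatorConstLp (hA.inter (hC (ν := ν) n)) (interCfin (ν := ν) n) (1:ℝ)]
        simp
        rfl
      rw [← ENNReal.ofReal_tsum_of_nonneg (fun i => hℓpos i _ (chi_nonneg _ _)) h2.summable,
        h2.tsum_eq, h3, ENNReal.ofReal_toReal (interCfin n)]
    rw [tsum_congr hn, ← measure_iUnion (fun j k hjk => (hCdisj hjk).mono
      Set.inter_subset_right Set.inter_subset_right) (fun n => hA.inter (hC n)),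
      ← Set.inter_iUnion, hCunion, Set.inter_univ]
  have hwd : ν.withDensity (fun y => ∑' i, g i y) = ν := by
    have hfe : (fun y => ∑' i, g i y) = ∑' i, g i := by
      funext y
      rw [ENNReal.tsum_apply]
    rw [hfe, withDensity_tsum hgmeas]
    refine Measure.ext fun A hA => ?_
    rw [Measure.sum_apply _ hA,
      tsum_congr (fun i => by rw [Measure.withDensity_rnDeriv_eq _ _ (funcMeasure_ac _ _)]),
      hsum_meas A hA]
  have hone : ∀ᵐ y ∂ν, ∑' i, g i y = 1 := by
    have h1 := Measure.rnDeriv_withDensity ν (Measurable.ennreal_tsum hgmeas)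
    rw [hwd] at h1
    filter_upwards [h1, Measure.rnDeriv_self ν] with y h2 h3
    rw [← h2, h3]
  have hrepr : ∀ i, ∀ f : Lp ℝ 1 ν, ℓ i f = ∫ y, (g i y).toReal * f y ∂ν := by
    intro i f
    exact repr_eq (ℓ i) (ρ i) (funcMeasure_ac _ _)
      (fun A hA hfin => funcMeasure_apply_of_finite _ _ hA hfin)
      (fun A hA hfin => hℓpos i _ (chi_nonneg hA hfin))
      (c := ‖ℓ i‖₊) (dens_le_ae (ρ i) (funcMeasure_le_smul _ _)) f
  have hidx : ∀ x : X, ∃ j, x ∈ P j := by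
    intro x
    have : x ∈ ⋃ i, P i := by rw [hcover]; trivial
    exact Set.mem_iUnion.1 this
  have huniq : ∀ (x : X) (j k : ℕ), x ∈ P j → x ∈ P k → j = k := by
    intro x j k hj hk
    by_contra h
    exact (hdisj h).ne_of_mem hj hk rfl
  set K : X → Y → ℝ := fun x y => (∑' i, (P i).indicator
    (fun _ => if μ (P i) = 0 then (0:ℝ≥0∞) else (μ (P i))⁻¹ * g i y) x).toReal with hK
  refine ⟨K, ?_, ?_, ?_, ?_⟩
  · -- measurability
    have huncurry : Function.uncurry K = fun p : X × Y => (∑' i, (P i).indicator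
        (fun _ => if μ (P i) = 0 then (0:ℝ≥0∞) else (μ (P i))⁻¹ * g i p.2) p.1).toReal := rfl
    rw [huncurry]
    refine Measurable.ennreal_toReal (Measurable.ennreal_tsum fun i => ?_)
    have hrw : (fun p : X × Y => (P i).indicator
        (fun _ => if μ (P i) = 0 then (0:ℝ≥0∞) else (μ (P i))⁻¹ * g i p.2) p.1)
        = Set.indicator (P i ×ˢ Set.univ)
          (fun p : X × Y => if μ (P i) = 0 then (0:ℝ≥0∞) else (μ (P i))⁻¹ * g i p.2) := by
      funext p
      by_cases hp : p.1 ∈ P i <;> simp [Set.indicator, hp]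
    rw [hrw]
    refine Measurable.indicator ?_ ((hmeas i).prod MeasurableSet.univ)
    by_cases h : μ (P i) = 0
    · simp only [h, if_true]; exact measurable_const
    · simp only [h, if_false]
      exact ((hgmeas i).comp measurable_snd).const_mul _
  · intro x y
    exact ENNReal.toReal_nonneg
  · -- normalization
    have hnullg : ∀ᵐ y ∂ν, ∀ i, μ (P i) = 0 → g i y = 0 := by
      rw [ae_all_iff]
      intro i
      by_cases h : μ (P i) = 0
      · have h1 : (ρ i).rnDeriv ν =ᵐ[ν] 0 := by
          rw [hρnull i h]
          exact Measure.rnDeriv_zero ν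
        filter_upwards [h1] with y hy _
        exact hy
      · filter_upwards with y hy
        exact absurd hy h
    filter_upwards [hone, hnullg] with y h1 h2
    have hFmeas : Measurable (fun x => ∑' i, (P i).indicator
        (fun _ => if μ (P i) = 0 then (0:ℝ≥0∞) else (μ (P i))⁻¹ * g i y) x) :=
      Measurable.ennreal_tsum fun i => measurable_const.indicator (hmeas i)
    have hterm : ∀ i, ∫⁻ x, (P i).indicator
        (fun _ => if μ (P i) = 0 then (0:ℝ≥0∞) else (μ (P i))⁻¹ * g i y) x ∂μ = g i y := by
      intro i
      rw [lintegral_indicator_const (hmeas i)]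
      by_cases h : μ (P i) = 0
      · simp [h, h2 i h]
      · simp only [h, if_false]
        rw [mul_comm, ← mul_assoc, ENNReal.mul_inv_cancel h (hfin i).ne, one_mul]
    have hlint : ∫⁻ x, (∑' i, (P i).indicator
        (fun _ => if μ (P i) = 0 then (0:ℝ≥0∞) else (μ (P i))⁻¹ * g i y) x) ∂μ = 1 := by
      rw [lintegral_tsum (fun i => (measurable_const.indicator (hmeas i)).aemeasurable),
        tsum_congr hterm, h1]
    have := integral_toReal hFmeas.aemeasurable
      (ae_lt_top hFmeas (by rw [hlint]; exact ENNReal.one_ne_top))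
    calc ∫ x, K x y ∂μ = (∫⁻ x, (∑' i, (P i).indicator
        (fun _ => if μ (P i) = 0 then (0:ℝ≥0∞) else (μ (P i))⁻¹ * g i y) x) ∂μ).toReal :=
      this
      _ = 1 := by rw [hlint]; simp
  · -- the integral formula
    intro f x
    obtain ⟨j, hj⟩ := hidx x
    have hzero : ∀ i, i ≠ j → (P i).indicator
        (fun _ => if μ (P i) = 0 then (0:ℝ) else (μ (P i)).toReal⁻¹
          * ∫ t in P i, (S f : X → ℝ) t ∂μ) x = 0 := by
      intro i hij
      refine Set.indicator_of_notMem (fun hx => hij (huniq x i j hx hj)) _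
    have hKx : ∀ y, K x y = (if μ (P j) = 0 then (0:ℝ≥0∞)
        else (μ (P j))⁻¹ * g j y).toReal := by
      intro y
      show (∑' i, (P i).indicator
        (fun _ => if μ (P i) = 0 then (0:ℝ≥0∞) else (μ (P i))⁻¹ * g i y) x).toReal = _
      congr 1
      rw [tsum_eq_single j (fun i hij => Set.indicator_of_notMem
        (fun hx => hij (huniq x i j hx hj)) _)]
      exact Set.indicator_of_mem hj _
    have hLHS : partitionAverage μ P (S f : X → ℝ) x
        = if μ (P j) = 0 then (0:ℝ) else (μ (P j)).toReal⁻¹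
          * ∫ t in P j, (S f : X → ℝ) t ∂μ := by
      rw [partitionAverage, tsum_eq_single j hzero]
      exact Set.indicator_of_mem hj _
    by_cases h : μ (P j) = 0
    · simp only [hLHS, h, if_true]
      have : ∀ y, K x y * (f : Y → ℝ) y = 0 := by
        intro y
        rw [hKx y]
        simp [h]
      rw [show (fun y => K x y * (f : Y → ℝ) y) = fun _ => (0:ℝ) from funext this]
      simp
    · simp only [hLHS, h, if_false]
      have hint : (fun y => K x y * (f : Y → ℝ) y)
          = fun y => (μ (P j)).toReal⁻¹ * ((g j y).toReal * (f : Y → ℝ) y) := by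
        funext y
        rw [hKx y]
        simp only [h, if_false]
        rw [ENNReal.toReal_mul, ENNReal.toReal_inv]
        ring
      rw [hint, integral_const_mul, ← hrepr j f, hℓ_apply]
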